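/- If G is the star graph of some connected graph H and |V(G)| ≥ 2, then G has no cut-vertex (G is 2-connected). -/

import Mathlib

open SimpleGraph

/-- An induced star of `H` with center `v` and leaf set `L`: `L` is a nonempty
independent set of neighbors of `v`. -/
def IsStar {V : Type*} (H : SimpleGraph V) (v : V) (L : Set V) : Prop :=
  L.Nonempty ∧ (∀ u ∈ L, H.Adj v u) ∧ ∀ u ∈ L, ∀ w ∈ L, ¬ H.Adj u w

/-- `S` is the vertex set of an induced star of `H`. -/
def IsStarSet {V : Type*} (H : SimpleGraph V) (S : Set V) : Prop :=
  ∃ v L, IsStar H v L ∧ S = insert v L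

/-- `S` is the vertex set of a maximal induced star of `H`. -/
def IsMaxStarSet {V : Type*} (H : SimpleGraph V) (S : Set V) : Prop :=
  IsStarSet H S ∧ ∀ T, IsStarSet H T → S ⊆ T → S = T

/-- The set of (vertex sets of) maximal induced stars of `H`. -/
def maxStars {V : Type*} (H : SimpleGraph V) : Set (Set V) := {S | IsMaxStarSet H S}

/-- The star graph of `H`: the intersection graph of the maximal induced stars of `H`. -/
def starGraph {V : Type*} (H : SimpleGraph V) : SimpleGraph ↥(maxStars H) :=
  SimpleGraph.fromRel fun S T => ((S : Set V) ∩ (T : Set V)).Nonempty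

section Aux

variable {V : Type*} [Fintype V] {H : SimpleGraph V}

lemma starSet_nonempty {S : Set V} (h : IsStarSet H S) : S.Nonempty := by
  obtain ⟨v, L, _, rfl⟩ := h
  exact ⟨v, Set.mem_insert _ _⟩

lemma exists_maxStar {S : Set V} (h : IsStarSet H S) :
    ∃ M, IsMaxStarSet H M ∧ S ⊆ M := by
  classical
  have hfin : {T : Set V | IsStarSet H T ∧ S ⊆ T}.Finite := Set.toFinite _
  obtain ⟨M, hM, hmax⟩ :=
    Set.Finite.exists_maximalFor Set.ncard _ hfin ⟨S, h, subset_rfl⟩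
  refine ⟨M, ⟨hM.1, ?_⟩, hM.2⟩
  intro T hT hsub
  have hT' : T ∈ {T : Set V | IsStarSet H T ∧ S ⊆ T} := ⟨hT, hM.2.trans hsub⟩
  have hle : M.ncard ≤ T.ncard := Set.ncard_le_ncard hsub (Set.toFinite T)
  have heq := hmax (j := T) hT' hle
  exact Set.eq_of_subset_of_ncard_le hsub heq (Set.toFinite T)

lemma edge_maxStar {a b : V} (hab : H.Adj a b) :
    ∃ M, IsMaxStarSet H M ∧ a ∈ M ∧ b ∈ M := by
  have hs : IsStarSet H {a, b} := by
    refine ⟨a, {b}, ⟨Set.singleton_nonempty b, ?_, ?_⟩, rfl⟩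
    · intro u hu
      rw [Set.mem_singleton_iff] at hu
      subst hu; exact hab
    · intro u hu w hw
      rw [Set.mem_singleton_iff] at hu hw
      subst hu; subst hw; exact H.irrefl
  obtain ⟨M, hM, hsub⟩ := exists_maxStar hs
  exact ⟨M, hM, hsub (Set.mem_insert _ _), hsub (Set.mem_insert_of_mem _ rfl)⟩

lemma maxStar_exists_adj {M : Set V} (hM : IsStarSet H M) {u : V} (hu : u ∈ M) :
    ∃ z ∈ M, H.Adj u z := by
  obtain ⟨v, L, ⟨⟨l, hl⟩, hadj, _⟩, rfl⟩ := hM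
  rcases Set.mem_insert_iff.mp hu with rfl | huL
  · exact ⟨l, Set.mem_insert_of_mem _ hl, hadj l hl⟩
  · exact ⟨v, Set.mem_insert _ _, (hadj u huL).symm⟩

end Aux

/-- The star graph of a connected graph, when it has at least two vertices,
is connected and has no cut-vertex. -/
theorem stmt6 {V : Type*} [Fintype V] (H : SimpleGraph V) (hH : H.Connected)
    (h2 : 2 ≤ (maxStars H).ncard) :
    (_root_.starGraph H).Connected ∧
      ∀ x : ↥(maxStars H),
        ((_root_.starGraph H).induce ({x}ᶜ : Set ↥(maxStars H))).Connected := by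
  classical
  have hne : (maxStars H).Nonempty := by
    rcases Set.eq_empty_or_nonempty (maxStars H) with h | h
    · rw [h, Set.ncard_empty] at h2; omega
    · exact h
  -- Part 1: connectivity of the star graph
  have c1 : ∀ A B : ↥(maxStars H), ((A : Set V) ∩ (B : Set V)).Nonempty →
      (_root_.starGraph H).Reachable A B := by
    intro A B hAB
    by_cases h : A = B
    · exact h ▸ Reachable.refl A
    · exact Adj.reachable ((SimpleGraph.fromRel_adj _ _ _).mpr ⟨h, Or.inl hAB⟩)
  have key1 : ∀ {s t : V} (p : H.Walk s t), ∀ B : ↥(maxStars H), t ∈ (B : Set V) →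
      ∀ A : ↥(maxStars H), s ∈ (A : Set V) → (_root_.starGraph H).Reachable A B := by
    intro s t p
    induction p with
    | nil =>
      intro B htB A hsA
      exact c1 A B ⟨_, hsA, htB⟩
    | @cons s s' t h p ih =>
      intro B htB A hsA
      obtain ⟨M, hM, h1, h2'⟩ := edge_maxStar h
      exact (c1 A ⟨M, hM⟩ ⟨s, hsA, h1⟩).trans (ih B htB ⟨M, hM⟩ h2')
  have hconn : (_root_.starGraph H).Connected := by
    rw [SimpleGraph.connected_iff]
    refine ⟨?_, ⟨⟨hne.some, hne.some_mem⟩⟩⟩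
    intro A B
    obtain ⟨s, hs⟩ := starSet_nonempty A.2.1
    obtain ⟨t, ht⟩ := starSet_nonempty B.2.1
    obtain ⟨p⟩ := hH.preconnected s t
    exact key1 p B ht A hs
  refine ⟨hconn, ?_⟩
  -- Part 2: no cut-vertex
  intro x
  obtain ⟨c, L, hstar, hXeq⟩ := x.2.1
  set G' := (_root_.starGraph H).induce ({x}ᶜ : Set ↥(maxStars H)) with hG'
  have C1 : ∀ A B : ↥({x}ᶜ : Set ↥(maxStars H)),
      (A.1.1 ∩ B.1.1).Nonempty → G'.Reachable A B := by
    intro A B hAB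
    by_cases h : A = B
    · exact h ▸ Reachable.refl A
    · refine Adj.reachable ?_
      have hne' : A.1 ≠ B.1 := fun hh => h (Subtype.ext hh)
      show (_root_.starGraph H).Adj A.1 B.1
      exact (SimpleGraph.fromRel_adj _ _ _).mpr ⟨hne', Or.inl hAB⟩
  -- ★★ : any surviving star meeting X reaches (in one step) a surviving star containing c
  have SS : ∀ A : ↥({x}ᶜ : Set ↥(maxStars H)), (A.1.1 ∩ x.1).Nonempty →
      ∃ N : ↥({x}ᶜ : Set ↥(maxStars H)), c ∈ N.1.1 ∧ (N.1.1 ∩ A.1.1).Nonempty := by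
    rintro A ⟨u, huA, huX⟩
    by_cases hc : c ∈ A.1.1
    · exact ⟨A, hc, ⟨c, hc, hc⟩⟩
    · have huL : u ∈ L := by
        rw [hXeq] at huX
        rcases Set.mem_insert_iff.mp huX with rfl | h
        · exact absurd huA hc
        · exact h
      have hcu : H.Adj c u := hstar.2.1 u huL
      obtain ⟨z, hzA, huz⟩ := maxStar_exists_adj A.1.2.1 huA
      have hzc : z ≠ c := fun h => hc (h ▸ hzA)
      have hzL : z ∉ L := fun h => hstar.2.2 u huL z h huz
      have hzX : z ∉ x.1 := by
        rw [hXeq]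
        intro hz
        rcases Set.mem_insert_iff.mp hz with rfl | h
        · exact hzc rfl
        · exact hzL h
      by_cases hcz : H.Adj c z
      · obtain ⟨M, hM, hcM, hzM⟩ := edge_maxStar hcz
        have hMX : M ≠ x.1 := fun h => hzX (h ▸ hzM)
        exact ⟨⟨⟨M, hM⟩, Set.mem_compl_singleton_iff.mpr
          (fun hh => hMX (congrArg Subtype.val hh))⟩, hcM, ⟨z, hzM, hzA⟩⟩
      · have hstar2 : IsStarSet H (insert u {c, z}) := by
          refine ⟨u, {c, z}, ⟨⟨c, Set.mem_insert _ _⟩, ?_, ?_⟩, rfl⟩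
          · intro w hw
            rcases Set.mem_insert_iff.mp hw with rfl | hw
            · exact hcu.symm
            · rw [Set.mem_singleton_iff] at hw
              subst hw; exact huz
          · intro a ha b hb
            rcases Set.mem_insert_iff.mp ha with rfl | ha
            · rcases Set.mem_insert_iff.mp hb with rfl | hb
              · exact H.irrefl
              · rw [Set.mem_singleton_iff] at hb
                subst hb; exact hcz
            · rw [Set.mem_singleton_iff] at ha
              subst ha
              rcases Set.mem_insert_iff.mp hb with rfl | hb
              · exact fun hh => hcz hh.symm
              · rw [Set.mem_singleton_iff] at hb
                subst hb; exact H.irrefl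
        obtain ⟨M, hM, hsub⟩ := exists_maxStar hstar2
        have hzM : z ∈ M := hsub (by simp)
        have hcM : c ∈ M := hsub (by simp)
        have hMX : M ≠ x.1 := fun h => hzX (h ▸ hzM)
        exact ⟨⟨⟨M, hM⟩, Set.mem_compl_singleton_iff.mpr
          (fun hh => hMX (congrArg Subtype.val hh))⟩, hcM, ⟨z, hzM, hzA⟩⟩
  -- Any two surviving stars meeting X are connected in G - X
  have C2 : ∀ A B : ↥({x}ᶜ : Set ↥(maxStars H)),
      (A.1.1 ∩ x.1).Nonempty → (B.1.1 ∩ x.1).Nonempty → G'.Reachable A B := by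
    intro A B hA hB
    obtain ⟨N, hcN, ⟨w, hwN, hwA⟩⟩ := SS A hA
    obtain ⟨N', hcN', ⟨w', hwN', hwB⟩⟩ := SS B hB
    exact ((C1 A N ⟨w, hwA, hwN⟩).trans (C1 N N' ⟨c, hcN, hcN'⟩)).trans
      (C1 N' B ⟨w', hwN', hwB⟩)
  -- main walk induction
  have key : ∀ {s t : V} (p : H.Walk s t), ∀ B : ↥({x}ᶜ : Set ↥(maxStars H)), t ∈ B.1.1 →
      ∀ A : ↥({x}ᶜ : Set ↥(maxStars H)),
        (s ∈ A.1.1 ∨ (s ∈ x.1 ∧ (A.1.1 ∩ x.1).Nonempty)) → G'.Reachable A B := by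
    intro s t p
    induction p with
    | nil =>
      intro B htB A hA
      rcases hA with hsA | ⟨hsX, hAX⟩
      · exact C1 A B ⟨_, hsA, htB⟩
      · exact C2 A B hAX ⟨_, htB, hsX⟩
    | @cons s s' t h p ih =>
      intro B htB A hA
      by_cases hs'X : s' ∈ x.1
      · rcases hA with hsA | ⟨hsX, hAX⟩
        · by_cases hsX : s ∈ x.1
          · exact ih B htB A (Or.inr ⟨hs'X, ⟨s, hsA, hsX⟩⟩)
          · obtain ⟨M, hM, h1, h2'⟩ := edge_maxStar h
            have hMX : M ≠ x.1 := fun he => hsX (he ▸ h1)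
            refine (C1 A ⟨⟨M, hM⟩, Set.mem_compl_singleton_iff.mpr
              (fun hh => hMX (congrArg Subtype.val hh))⟩ ⟨s, hsA, h1⟩).trans
              (ih B htB _ (Or.inl h2'))
        · exact ih B htB A (Or.inr ⟨hs'X, hAX⟩)
      · obtain ⟨M, hM, h1, h2'⟩ := edge_maxStar h
        have hMX : M ≠ x.1 := fun he => hs'X (he ▸ h2')
        set M' : ↥({x}ᶜ : Set ↥(maxStars H)) := ⟨⟨M, hM⟩, Set.mem_compl_singleton_iff.mpr
          (fun hh => hMX (congrArg Subtype.val hh))⟩ with hM'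
        have hAM : G'.Reachable A M' := by
          rcases hA with hsA | ⟨hsX, hAX⟩
          · exact C1 A M' ⟨s, hsA, h1⟩
          · exact C2 A M' hAX ⟨s, h1, hsX⟩
        exact hAM.trans (ih B htB M' (Or.inl h2'))
  rw [SimpleGraph.connected_iff]
  constructor
  · intro A B
    obtain ⟨s, hs⟩ := starSet_nonempty A.1.2.1
    obtain ⟨t, ht⟩ := starSet_nonempty B.1.2.1
    obtain ⟨p⟩ := hH.preconnected s t
    exact key p B ht A (Or.inl hs)
  · obtain ⟨a, b, ha, hb, hab⟩ := (Set.one_lt_ncard_iff (Set.toFinite _)).mp h2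
    have : ∃ y, ∃ _ : y ∈ maxStars H, y ≠ x.1 := by
      by_cases hax : a = x.1
      · exact ⟨b, hb, fun hbx => hab (hax.trans hbx.symm)⟩
      · exact ⟨a, ha, hax⟩
    obtain ⟨y, hy, hyx⟩ := this
    exact ⟨⟨⟨y, hy⟩, Set.mem_compl_singleton_iff.mpr
      (fun hh => hyx (congrArg Subtype.val hh))⟩⟩
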